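/- Let n ≥ 2 be an integer and let a, b be real numbers with a > 0 and 0 < b < 1. Set ω_k = e^{2πik/n} for k = 1, …, n−1. Then F_D^{(n−1)}(1−b; b, …, b; 1+a−b | ω_1/(ω_1−1), …, ω_{n−1}/(ω_{n−1}−1)) = n^b · Γ(1+a−b)·Γ(1+a/n) / (Γ(1+a)·Γ(1+a/n−b)). -/

import Mathlib

open MeasureTheory

noncomputable def lauricellaFD (n : ℕ) (a : ℂ) (b : Fin n → ℂ) (c : ℂ) (x : Fin n → ℂ) : ℂ :=
  (Complex.Gamma c / (Complex.Gamma a * Complex.Gamma (c - a))) *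
    ∫ u in (0:ℝ)..1, (u : ℂ) ^ (a - 1) * ((1 : ℂ) - u) ^ (c - a - 1) *
      ∏ k, ((1 : ℂ) - x k * u) ^ (-(b k))

noncomputable def appellF1 (a b₁ b₂ c x₁ x₂ : ℂ) : ℂ :=
  lauricellaFD 2 a ![b₁, b₂] c ![x₁, x₂]

noncomputable def ellipticK (k : ℝ) : ℝ :=
  ∫ θ in (0:ℝ)..(Real.pi/2), (1 - k ^ 2 * Real.sin θ ^ 2) ^ (-(1:ℝ)/2)

section Helpers
open Complex Finset Polynomial intervalIntegral Set


lemma prod_one_sub_zeta_pow (n : ℕ) (hn : 0 < n) (t : ℂ) :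
    ∏ i ∈ Finset.range n, (1 - Complex.exp (2 * Real.pi * I / n) ^ i * t) = 1 - t ^ n := by
  set ζ : ℂ := Complex.exp (2 * Real.pi * I / n)
  rcases eq_or_ne t 0 with rfl | ht
  · simp [zero_pow hn.ne']
  · have hζ : IsPrimitiveRoot ζ n := Complex.isPrimitiveRoot_exp n hn.ne'
    have hpoly := X_pow_sub_C_eq_prod hζ hn (one_pow n)
    have h := congrArg (Polynomial.eval t⁻¹) hpoly
    simp only [eval_sub, eval_pow, eval_X, eval_C, eval_prod, mul_one] at h
    have htn : t ^ n ≠ 0 := pow_ne_zero _ ht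
    calc ∏ i ∈ Finset.range n, (1 - ζ ^ i * t)
        = ∏ i ∈ Finset.range n, (t * (t⁻¹ - ζ ^ i)) := by
          refine Finset.prod_congr rfl fun i _ => ?_
          field_simp
      _ = t ^ n * ∏ i ∈ Finset.range n, (t⁻¹ - ζ ^ i) := by
          rw [Finset.prod_mul_distrib, Finset.prod_const, Finset.card_range]
      _ = t ^ n * (t⁻¹ ^ n - 1) := by rw [← h]
      _ = 1 - t ^ n := by rw [mul_sub, inv_pow, mul_inv_cancel₀ htn]; ring

lemma prod_one_sub_zeta_pow_succ (n : ℕ) (hn : 0 < n) (t : ℂ) :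
    (1 - t) * ∏ i ∈ Finset.range (n - 1), (1 - Complex.exp (2 * Real.pi * I / n) ^ (i + 1) * t)
      = 1 - t ^ n := by
  rw [← prod_one_sub_zeta_pow n hn t]
  obtain ⟨m, rfl⟩ : ∃ m, n = m + 1 := ⟨n - 1, (Nat.succ_pred_eq_of_pos hn).symm⟩
  rw [Finset.prod_range_succ']
  simp [mul_comm]

lemma prod_one_sub_zeta (n : ℕ) (hn : 0 < n) :
    ∏ i ∈ Finset.range (n - 1), (1 - Complex.exp (2 * Real.pi * I / n) ^ (i + 1)) = n := by
  set ζ : ℂ := Complex.exp (2 * Real.pi * I / n)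
  have hF : Continuous fun t : ℂ => ∏ i ∈ Finset.range (n - 1), (1 - ζ ^ (i + 1) * t) := by
    exact continuous_finset_prod _ fun i _ => by continuity
  have hG : Continuous fun t : ℂ => ∑ i ∈ Finset.range n, t ^ i := by
    exact continuous_finset_sum _ fun i _ => by continuity
  have heq : ∀ t : ℂ, t ≠ 1 →
      (∏ i ∈ Finset.range (n - 1), (1 - ζ ^ (i + 1) * t)) = ∑ i ∈ Finset.range n, t ^ i := by
    intro t ht
    have h1 := prod_one_sub_zeta_pow_succ n hn t
    have h2 : (∑ i ∈ Finset.range n, t ^ i) * (t - 1) = t ^ n - 1 := geom_sum_mul t n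
    have h3 : (1 : ℂ) - t ≠ 0 := sub_ne_zero.mpr (Ne.symm ht)
    have : (1 - t) * (∑ i ∈ Finset.range n, t ^ i) = 1 - t ^ n := by
      have := h2
      linear_combination -h2
    exact mul_left_cancel₀ h3 (by rw [h1, this])
  have hdense : Dense ({(1 : ℂ)}ᶜ : Set ℂ) := dense_compl_singleton 1
  have := Continuous.ext_on hdense hF hG (fun t ht => heq t (by simpa using ht))
  have h1 := congrFun this 1
  simpa using h1

lemma re_div_sub_one {ω : ℂ} (h1 : ω ≠ 1) (hmul : ω * (starRingEnd ℂ) ω = 1) :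
    (ω / (ω - 1)).re = 1 / 2 := by
  have hc1 : (starRingEnd ℂ) ω ≠ 1 := by
    intro h; apply h1
    have := congrArg (starRingEnd ℂ) h
    simpa using this
  have hd1 : ω - 1 ≠ 0 := sub_ne_zero.mpr h1
  have hd2 : (starRingEnd ℂ) ω - 1 ≠ 0 := sub_ne_zero.mpr hc1
  have key : ω / (ω - 1) + (starRingEnd ℂ) (ω / (ω - 1)) = 1 := by
    rw [map_div₀, map_sub, map_one]
    field_simp
    linear_combination hmul
  have := Complex.add_conj (ω / (ω - 1))
  rw [this] at key
  have : (2 * (ω / (ω - 1)).re : ℝ) = (1 : ℝ) := by exact_mod_cast key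
  linarith

noncomputable def omC (n k : ℕ) : ℂ := Complex.exp (2 * Real.pi * I * ((k : ℂ) + 1) / n)

lemma omC_mul_conj (n k : ℕ) : omC n k * (starRingEnd ℂ) (omC n k) = 1 := by
  unfold omC
  rw [← Complex.exp_conj, ← Complex.exp_add]
  rw [show (starRingEnd ℂ) (2 * Real.pi * I * ((k : ℂ) + 1) / n) =
    -(2 * Real.pi * I * ((k : ℂ) + 1) / n) by
      simp [map_div₀, Complex.conj_I, map_ofNat]
      ring]
  simp

lemma omC_ne_one (n k : ℕ) (h2 : 2 ≤ n) (hk : k < n - 1) : omC n k ≠ 1 := by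
  intro h
  rw [omC, Complex.exp_eq_one_iff] at h
  obtain ⟨m, hm⟩ := h
  have hn0 : (n : ℂ) ≠ 0 := Nat.cast_ne_zero.mpr (by omega)
  have hI : (2 * (Real.pi : ℂ) * I) ≠ 0 := by
    simpa [mul_comm] using Complex.two_pi_I_ne_zero
  have hcast : ((k : ℂ) + 1) = (m : ℂ) * n := by
    field_simp at hm
    have h2 : (2 * (Real.pi : ℂ) * I) * ((k : ℂ) + 1) = (2 * (Real.pi : ℂ) * I) * ((m : ℂ) * n) := by
      linear_combination (2 * (Real.pi : ℂ) * I) * hm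
    exact mul_left_cancel₀ hI h2
  have hint : (k : ℤ) + 1 = m * n := by exact_mod_cast hcast
  have hkn : (k : ℤ) + 1 < n := by
    have : k + 1 < n := by omega
    exact_mod_cast Int.ofNat_lt.mpr this
  have hn2 : (2 : ℤ) ≤ n := by exact_mod_cast h2
  rcases le_or_gt m 0 with hm0 | hm0
  · nlinarith
  · nlinarith

lemma omC_pow (n k : ℕ) : Complex.exp (2 * Real.pi * I / n) ^ (k + 1) = omC n k := by
  rw [← Complex.exp_nat_mul, omC]
  congr 1
  push_cast
  ring

lemma omC_rev (n k : ℕ) (h2 : 2 ≤ n) (hk : k < n - 1) :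
    omC n (n - 2 - k) = (starRingEnd ℂ) (omC n k) := by
  unfold omC
  rw [← Complex.exp_conj]
  rw [show (starRingEnd ℂ) (2 * Real.pi * I * ((k : ℂ) + 1) / n) =
    -(2 * Real.pi * I * ((k : ℂ) + 1) / n) by
      simp [map_div₀, Complex.conj_I, map_ofNat]
      ring]
  have hcast : ((n - 2 - k : ℕ) : ℂ) = (n : ℂ) - 2 - k := by
    have h1 : k ≤ n - 2 := by omega
    have h2' : 2 ≤ n := h2
    push_cast [Nat.cast_sub h1, Nat.cast_sub h2']
    ring
  rw [hcast]
  have hn0 : (n : ℂ) ≠ 0 := Nat.cast_ne_zero.mpr (by omega)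
  rw [show 2 * (Real.pi:ℂ) * I * ((n : ℂ) - 2 - k + 1) / n =
      2 * Real.pi * I + -(2 * Real.pi * I * ((k : ℂ) + 1) / n) by field_simp; ring]
  rw [Complex.exp_add, Complex.exp_two_pi_mul_I, one_mul]

lemma prod_factors (n : ℕ) (hn : 2 ≤ n) (u : ℝ) (hu : u ∈ Set.Ioo (0:ℝ) 1) :
    ∏ k : Fin (n-1), ((1:ℂ) - (omC n k.1 / (omC n k.1 - 1)) * u)
      = ((((1 - (1-u)^n)/(n*u)) : ℝ) : ℂ) := by
  obtain ⟨hu0, hu1⟩ := hu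
  have hn0 : (n : ℂ) ≠ 0 := Nat.cast_ne_zero.mpr (by omega)
  have hu0' : (u : ℂ) ≠ 0 := Complex.ofReal_ne_zero.mpr (ne_of_gt hu0)
  have hfac : ∀ k : Fin (n-1), (1:ℂ) - (omC n k.1 / (omC n k.1 - 1)) * u
      = (1 - omC n k.1 * (1 - u)) / (1 - omC n k.1) := by
    intro k
    have h1 : omC n k.1 ≠ 1 := omC_ne_one n k.1 hn k.2
    have hd : omC n k.1 - 1 ≠ 0 := sub_ne_zero.mpr h1
    have hd' : (1:ℂ) - omC n k.1 ≠ 0 := sub_ne_zero.mpr (Ne.symm h1)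
    field_simp
    ring
  rw [Finset.prod_congr rfl (fun k _ => hfac k), Finset.prod_div_distrib]
  have hnum : ∏ k : Fin (n-1), ((1:ℂ) - omC n k.1 * (1 - u))
      = (1 - (1 - (u:ℂ))^n) / u := by
    rw [Fin.prod_univ_eq_prod_range (fun i => (1:ℂ) - omC n i * (1 - u)) (n-1)]
    have := prod_one_sub_zeta_pow_succ n (by omega) (1 - (u:ℂ))
    simp_rw [omC_pow] at this
    have hu' : (1:ℂ) - (1 - (u:ℂ)) = u := by ring
    rw [hu'] at this
    field_simp
    linear_combination this
  have hden : ∏ k : Fin (n-1), ((1:ℂ) - omC n k.1)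
      = n := by
    rw [Fin.prod_univ_eq_prod_range (fun i => (1:ℂ) - omC n i) (n-1)]
    have := prod_one_sub_zeta n (by omega)
    simp_rw [omC_pow] at this
    exact this
  rw [hnum, hden]
  push_cast
  rw [div_div]
  ring_nf

lemma prod_cpow_eq (n : ℕ) (hn : 2 ≤ n) (b u : ℝ) (hu : u ∈ Set.Ioo (0:ℝ) 1) :
    ∏ k : Fin (n-1), ((1:ℂ) - (omC n k.1 / (omC n k.1 - 1)) * u) ^ (-(b:ℂ))
      = ((((1 - (1-u)^n)/(n*u)) ^ (-b) : ℝ) : ℂ) := by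
  obtain ⟨hu0, hu1⟩ := hu
  set z : Fin (n-1) → ℂ := fun k => (1:ℂ) - (omC n k.1 / (omC n k.1 - 1)) * u with hz
  have hre : ∀ k, 0 < (z k).re := by
    intro k
    have h1 : omC n k.1 ≠ 1 := omC_ne_one n k.1 hn k.2
    have hrx : (omC n k.1 / (omC n k.1 - 1)).re = 1/2 :=
      re_div_sub_one h1 (omC_mul_conj n k.1)
    have : (z k).re = 1 - (omC n k.1 / (omC n k.1 - 1)).re * u := by
      simp [hz, Complex.sub_re, Complex.mul_re, Complex.ofReal_re, Complex.ofReal_im]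
    rw [this, hrx]
    linarith
  have hz0 : ∀ k, z k ≠ 0 := by
    intro k h
    have := hre k
    rw [h] at this
    simp at this
  have harg : ∀ k, (z k).arg ≠ Real.pi := by
    intro k h
    have := Complex.arg_eq_pi_iff.mp h
    linarith [hre k, this.1]
  have hconjz : ∀ k, z (Fin.rev k) = (starRingEnd ℂ) (z k) := by
    intro k
    have hrev : (Fin.rev k).1 = n - 2 - k.1 := by
      have := Fin.val_rev k
      omega
    simp only [hz, hrev, map_sub, map_one, map_mul, map_div₀, Complex.conj_ofReal]
    rw [omC_rev n k.1 hn k.2]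
  set S : ℂ := ∑ k, Complex.log (z k) with hS
  have hSconj : (starRingEnd ℂ) S = S := by
    rw [hS, map_sum]
    rw [show ∑ k, (starRingEnd ℂ) (Complex.log (z k)) = ∑ k, Complex.log (z (Fin.rev k)) by
      refine Finset.sum_congr rfl fun k _ => ?_
      rw [hconjz k, Complex.log_conj _ (harg k)]]
    exact Fintype.sum_equiv Fin.revPerm (fun k => Complex.log (z (Fin.rev k)))
      (fun k => Complex.log (z k)) (fun k => rfl)
  have hSre : S = ((S.re : ℝ) : ℂ) := (Complex.conj_eq_iff_re.mp hSconj).symm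
  have hexpS : Complex.exp S = ∏ k, z k := by
    rw [hS, Complex.exp_sum]
    exact Finset.prod_congr rfl fun k _ => Complex.exp_log (hz0 k)
  set P : ℝ := (1 - (1-u)^n)/(n*u) with hPdef
  have hP : 0 < P := by
    have hpow : (1-u)^n < 1 := pow_lt_one₀ (by linarith) (by linarith) (by omega)
    have hnpos : (0:ℝ) < n := by exact_mod_cast (by omega : 0 < n)
    apply div_pos (by linarith) (by positivity)
  have hprod : ∏ k, z k = (P : ℂ) := prod_factors n hn u ⟨hu0, hu1⟩
  have hSreP : S.re = Real.log P := by
    have h1 : Complex.exp (((S.re : ℝ) : ℂ)) = (P : ℂ) := by rw [← hSre, hexpS, hprod]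
    rw [← Complex.ofReal_exp] at h1
    have h2 : Real.exp S.re = P := Complex.ofReal_inj.mp h1
    rw [← h2, Real.log_exp]
  calc ∏ k, z k ^ (-(b:ℂ))
      = ∏ k, Complex.exp (Complex.log (z k) * (-(b:ℂ))) :=
        Finset.prod_congr rfl fun k _ => Complex.cpow_def_of_ne_zero (hz0 k) _
    _ = Complex.exp (S * (-(b:ℂ))) := by
        rw [← Complex.exp_sum, hS, Finset.sum_mul]
    _ = ((Real.exp (S.re * (-b)) : ℝ) : ℂ) := by
        rw [show S * (-(b:ℂ)) = ((S.re * (-b) : ℝ) : ℂ) by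
          rw [hSre]; simp [Complex.ofReal_re], Complex.ofReal_exp]
    _ = (((P ^ (-b) : ℝ)) : ℂ) := by rw [hSreP, ← Real.rpow_def_of_pos hP]


lemma subst_pow_n (n : ℕ) (hn : 2 ≤ n) (a b : ℝ) :
    ∫ v in (0:ℝ)..1, v ^ (a-1) * (1-v^n) ^ (-b)
      = ∫ t in (0:ℝ)..1, (1/n) * (t ^ (a/n-1) * (1-t) ^ (-b)) := by
  have hn0 : (n:ℝ) ≠ 0 := Nat.cast_ne_zero.mpr (by omega)
  have hnpos : (0:ℝ) < n := by exact_mod_cast (by omega : 0 < n)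
  rw [intervalIntegral.integral_of_le zero_le_one, intervalIntegral.integral_of_le zero_le_one,
    MeasureTheory.integral_Ioc_eq_integral_Ioo, MeasureTheory.integral_Ioc_eq_integral_Ioo]
  have himg : (fun x : ℝ => x ^ n) '' Set.Ioo 0 1 = Set.Ioo 0 1 := by
    apply Set.eq_of_subset_of_subset
    · rintro y ⟨x, hx, rfl⟩
      exact ⟨pow_pos hx.1 n, pow_lt_one₀ hx.1.le hx.2 (by omega)⟩
    · rintro y hy
      refine ⟨y ^ (1/(n:ℝ)), ⟨Real.rpow_pos_of_pos hy.1 _,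
        Real.rpow_lt_one hy.1.le hy.2 (by positivity)⟩, ?_⟩
      show (y ^ (1/(n:ℝ))) ^ n = y
      rw [← Real.rpow_natCast (y ^ (1/(n:ℝ))) n, ← Real.rpow_mul hy.1.le]
      field_simp
      simp
  have hder : ∀ x ∈ Set.Ioo (0:ℝ) 1, HasDerivWithinAt (fun x : ℝ => x ^ n)
      ((n : ℝ) * x ^ (n-1)) (Set.Ioo 0 1) x := fun x _ =>
    (hasDerivAt_pow n x).hasDerivWithinAt
  have hinj : Set.InjOn (fun x : ℝ => x ^ n) (Set.Ioo 0 1) :=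
    (pow_left_strictMonoOn₀ (by omega : n ≠ 0)).injOn.mono (fun x hx => le_of_lt hx.1)
  have key := integral_image_eq_integral_abs_deriv_smul measurableSet_Ioo hder hinj
    (fun t => (1/(n:ℝ)) * (t ^ (a/n-1) * (1-t) ^ (-b)))
  rw [himg] at key
  rw [key]
  apply MeasureTheory.setIntegral_congr_fun measurableSet_Ioo
  intro x hx
  obtain ⟨hx0, hx1⟩ := hx
  have h1 : ((x:ℝ) ^ n) ^ (a/n-1) = x ^ (a - n) := by
    rw [← Real.rpow_natCast x n, ← Real.rpow_mul hx0.le]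
    congr 1
    field_simp
  have h2 : |(n:ℝ) * x ^ (n-1)| = (n:ℝ) * x ^ (n-1) := by
    apply _root_.abs_of_nonneg
    positivity
  have h3 : (x:ℝ) ^ (n-1) = x ^ ((n:ℝ)-1) := by
    rw [← Real.rpow_natCast x (n-1)]
    congr 1
    push_cast [Nat.cast_sub (by omega : 1 ≤ n)]
    ring
  have h4 : (x:ℝ) ^ ((n:ℝ)-1) * x ^ (a-(n:ℝ)) = x ^ (a-1) := by
    rw [← Real.rpow_add hx0]
    congr 1
    ring
  simp only [smul_eq_mul]
  rw [h2, h1, h3, ← h4]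
  field_simp


lemma int01_congr {f g : ℝ → ℂ} (h : ∀ x ∈ Set.Ioo (0:ℝ) 1, f x = g x) :
    ∫ x in (0:ℝ)..1, f x = ∫ x in (0:ℝ)..1, g x := by
  rw [intervalIntegral.integral_of_le zero_le_one, intervalIntegral.integral_of_le zero_le_one,
    MeasureTheory.integral_Ioc_eq_integral_Ioo, MeasureTheory.integral_Ioc_eq_integral_Ioo]
  exact MeasureTheory.setIntegral_congr_fun measurableSet_Ioo h

lemma int01_congr_real {f g : ℝ → ℝ} (h : ∀ x ∈ Set.Ioo (0:ℝ) 1, f x = g x) :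
    ∫ x in (0:ℝ)..1, f x = ∫ x in (0:ℝ)..1, g x := by
  rw [intervalIntegral.integral_of_le zero_le_one, intervalIntegral.integral_of_le zero_le_one,
    MeasureTheory.integral_Ioc_eq_integral_Ioo, MeasureTheory.integral_Ioc_eq_integral_Ioo]
  exact MeasureTheory.setIntegral_congr_fun measurableSet_Ioo h

lemma real_beta (p q : ℝ) (hp : 0 < p) (hq : 0 < q) :
    ((∫ t in (0:ℝ)..1, t ^ (p-1) * (1-t) ^ (q-1) : ℝ) : ℂ)
      = Complex.Gamma p * Complex.Gamma q / Complex.Gamma (p + q) := by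
  have hre : (0:ℝ) < (Complex.ofReal p).re := by simpa using hp
  have hre' : (0:ℝ) < (Complex.ofReal q).re := by simpa using hq
  have hB := Complex.Gamma_mul_Gamma_eq_betaIntegral hre hre'
  have hne : Complex.Gamma ((p:ℂ) + q) ≠ 0 := by
    apply Complex.Gamma_ne_zero_of_re_pos
    simp only [Complex.add_re, Complex.ofReal_re]
    linarith
  have hBI : Complex.betaIntegral p q
      = ((∫ t in (0:ℝ)..1, t ^ (p-1) * (1-t) ^ (q-1) : ℝ) : ℂ) := by
    rw [Complex.betaIntegral]
    rw [show ((∫ t in (0:ℝ)..1, t ^ (p-1) * (1-t) ^ (q-1) : ℝ) : ℂ)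
        = ∫ t in (0:ℝ)..1, ((t ^ (p-1) * (1-t) ^ (q-1) : ℝ) : ℂ) from
      (intervalIntegral.integral_ofReal).symm]
    apply int01_congr
    intro x hx
    obtain ⟨hx0, hx1⟩ := hx
    rw [Complex.ofReal_mul, Complex.ofReal_cpow hx0.le, Complex.ofReal_cpow (by linarith : (0:ℝ) ≤ 1 - x)]
    push_cast
    ring_nf
  rw [← hBI, hB]
  push_cast
  field_simp

lemma real_comb (n : ℕ) (hn : 2 ≤ n) (b u : ℝ) (hu0 : 0 < u) (hu1 : u < 1) :
    u ^ (-b) * (((1-(1-u)^n)/(n*u)) ^ (-b)) = (n:ℝ) ^ b * (1-(1-u)^n) ^ (-b) := by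
  have hnpos : (0:ℝ) < n := by exact_mod_cast (by omega : 0 < n)
  have hA : (0:ℝ) < 1-(1-u)^n := by
    have hpow : (1-u)^n < 1 := pow_lt_one₀ (by linarith) (by linarith) (by omega)
    linarith
  rw [Real.div_rpow hA.le (by positivity), Real.mul_rpow hnpos.le hu0.le]
  have hX : u ^ (-b) ≠ 0 := (Real.rpow_pos_of_pos hu0 _).ne'
  have hn' : (n:ℝ) ^ (-b) = ((n:ℝ) ^ b)⁻¹ := Real.rpow_neg hnpos.le b
  have hnb : (n:ℝ) ^ b ≠ 0 := (Real.rpow_pos_of_pos hnpos _).ne'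
  field_simp [hn']
  ring
  rw [hn', inv_mul_cancel₀ hnb]

end Helpers

theorem kummer_lauricella_pfaff (n : ℕ) (hn : 2 ≤ n) (a b : ℝ) (ha : 0 < a)
    (hb0 : 0 < b) (hb1 : b < 1) :
    lauricellaFD (n - 1) (1 - (b : ℂ)) (fun _ => (b : ℂ)) (1 + a - b)
      (fun k =>
        Complex.exp (2 * Real.pi * Complex.I * ((k.1 : ℂ) + 1) / (n : ℂ)) /
          (Complex.exp (2 * Real.pi * Complex.I * ((k.1 : ℂ) + 1) / (n : ℂ)) - 1)) =
    ((n : ℝ) ^ b : ℝ) * Complex.Gamma (1 + (a : ℂ) - b) * Complex.Gamma (1 + (a : ℂ) / n) /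
      (Complex.Gamma (1 + (a : ℂ)) * Complex.Gamma (1 + (a : ℂ) / n - b)) := by
  have hnpos : (0:ℝ) < n := by exact_mod_cast (by omega : 0 < n)
  have hn0 : (n:ℝ) ≠ 0 := ne_of_gt hnpos
  have hb' : (0:ℝ) < 1 - b := by linarith
  have han : 0 < a / (n:ℝ) := div_pos ha hnpos
  have hx : (fun k : Fin (n-1) =>
      Complex.exp (2 * Real.pi * Complex.I * ((k.1 : ℂ) + 1) / (n : ℂ)) /
        (Complex.exp (2 * Real.pi * Complex.I * ((k.1 : ℂ) + 1) / (n : ℂ)) - 1))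
      = fun k : Fin (n-1) => omC n k.1 / (omC n k.1 - 1) := rfl
  rw [hx]
  unfold lauricellaFD
  have hstep1 : (∫ u in (0:ℝ)..1, (u:ℂ) ^ ((1 - (b:ℂ)) - 1) *
        ((1:ℂ) - u) ^ ((1 + (a:ℂ) - b) - (1 - b) - 1) *
        ∏ k : Fin (n-1), ((1:ℂ) - omC n k.1 / (omC n k.1 - 1) * u) ^ (-((fun _ : Fin (n-1) => (b:ℂ)) k)))
      = (((n:ℝ) ^ b : ℝ) : ℂ) *
        ((∫ u in (0:ℝ)..1, (1-u) ^ (a-1) * (1-(1-u)^n) ^ (-b) : ℝ) : ℂ) := by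
    rw [int01_congr (g := fun u : ℝ =>
        (((n:ℝ) ^ b * ((1-u) ^ (a-1) * (1-(1-u)^n) ^ (-b)) : ℝ) : ℂ)) ?_]
    · rw [intervalIntegral.integral_ofReal, intervalIntegral.integral_const_mul,
        Complex.ofReal_mul]
    · intro u hu
      obtain ⟨hu0, hu1⟩ := hu
      simp only
      rw [show ((1:ℂ) - (b:ℂ)) - 1 = ((-b : ℝ) : ℂ) by push_cast; ring]
      rw [show (1 + (a:ℂ) - ↑b) - (1 - ↑b) - 1 = ((a - 1 : ℝ) : ℂ) by push_cast; ring]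
      rw [show (1:ℂ) - (u:ℂ) = ((1 - u : ℝ) : ℂ) by push_cast; ring]
      rw [← Complex.ofReal_cpow hu0.le, ← Complex.ofReal_cpow (by linarith : (0:ℝ) ≤ 1 - u)]
      rw [prod_cpow_eq n hn b u ⟨hu0, hu1⟩]
      rw [← Complex.ofReal_mul, ← Complex.ofReal_mul]
      congr 1
      linear_combination ((1-u : ℝ)) ^ (a-1) * real_comb n hn b u hu0 hu1
  rw [hstep1]
  have hsub : (∫ u in (0:ℝ)..1, (1-u) ^ (a-1) * (1-(1-u)^n) ^ (-b) : ℝ)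
      = ∫ v in (0:ℝ)..1, v ^ (a-1) * (1-v^n) ^ (-b) := by
    simpa using intervalIntegral.integral_comp_sub_left
      (a := (0:ℝ)) (b := 1) (fun v : ℝ => v ^ (a-1) * (1-v^n) ^ (-b)) 1
  rw [hsub, subst_pow_n n hn a b, intervalIntegral.integral_const_mul]
  rw [show (fun t : ℝ => t ^ (a/(n:ℝ)-1) * (1-t) ^ (-b))
      = fun t : ℝ => t ^ (a/(n:ℝ)-1) * (1-t) ^ ((1-b)-1) by
    funext t; congr 1; ring_nf]
  rw [Complex.ofReal_mul, real_beta (a/(n:ℝ)) (1-b) han hb']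
  have e1 : (1:ℂ) + ↑a - ↑b - (1 - ↑b) = (a:ℂ) := by ring
  have e2 : ((a/(n:ℝ) : ℝ) : ℂ) = (a:ℂ)/(n:ℂ) := by push_cast; ring
  have e3 : ((1-b : ℝ) : ℂ) = 1 - (b:ℂ) := by push_cast; ring
  rw [e1, e2, e3]
  have ha0 : (a:ℂ) ≠ 0 := Complex.ofReal_ne_zero.mpr (ne_of_gt ha)
  have hnC : (n:ℂ) ≠ 0 := by exact_mod_cast Complex.ofReal_ne_zero.mpr hn0
  have han0 : (a:ℂ)/(n:ℂ) ≠ 0 := div_ne_zero ha0 hnC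
  have g1 : Complex.Gamma (1 + (a:ℂ)) = (a:ℂ) * Complex.Gamma (a:ℂ) := by
    rw [show (1:ℂ) + (a:ℂ) = (a:ℂ) + 1 by ring, Complex.Gamma_add_one _ ha0]
  have g2 : Complex.Gamma (1 + (a:ℂ)/(n:ℂ)) = ((a:ℂ)/(n:ℂ)) * Complex.Gamma ((a:ℂ)/(n:ℂ)) := by
    rw [show (1:ℂ) + (a:ℂ)/(n:ℂ) = (a:ℂ)/(n:ℂ) + 1 by ring, Complex.Gamma_add_one _ han0]
  have g3 : Complex.Gamma (1 + (a:ℂ)/(n:ℂ) - (b:ℂ)) = Complex.Gamma ((a:ℂ)/(n:ℂ) + (1 - (b:ℂ))) := by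
    congr 1; ring
  rw [g1, g2, g3]
  have hG1 : Complex.Gamma (1 - (b:ℂ)) ≠ 0 := by
    apply Complex.Gamma_ne_zero_of_re_pos; simp [Complex.sub_re]; linarith
  have hG2 : Complex.Gamma ((a:ℂ)) ≠ 0 := by
    apply Complex.Gamma_ne_zero_of_re_pos; simpa using ha
  have hG3 : Complex.Gamma ((a:ℂ)/(n:ℂ)) ≠ 0 := by
    apply Complex.Gamma_ne_zero_of_re_pos
    rw [show (a:ℂ)/(n:ℂ) = ((a/(n:ℝ) : ℝ) : ℂ) by push_cast; ring]
    simpa using han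
  have hG4 : Complex.Gamma ((a:ℂ)/(n:ℂ) + (1 - (b:ℂ))) ≠ 0 := by
    apply Complex.Gamma_ne_zero_of_re_pos
    rw [show (a:ℂ)/(n:ℂ) + (1 - (b:ℂ)) = ((a/(n:ℝ) + (1-b) : ℝ) : ℂ) by push_cast; ring]
    simpa using by linarith [han, hb'] 
  rw [show ((1/(n:ℝ) : ℝ) : ℂ) = ((n:ℂ))⁻¹ by push_cast; ring]
  set G0 := Complex.Gamma (1 + (a:ℂ) - b) with hG0def
  set X := Complex.Gamma (1 - (b:ℂ)) with hXdef
  set Y := Complex.Gamma ((a:ℂ)) with hYdef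
  set Z := Complex.Gamma ((a:ℂ)/(n:ℂ)) with hZdef
  set W := Complex.Gamma ((a:ℂ)/(n:ℂ) + (1 - (b:ℂ))) with hWdef
  field_simp
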